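/- Let $\sigma_t = \sigma_{\min}^t$ with $\sigma_{\min} \in (0,1)$. Then for all $t \in (0,1)$, $\frac{t}{t^2 + \sigma_t^2} \leq \max(\log(\sigma_{\min}^{-1}), e^2)$. -/
import Mathlib


/-- For `σ_t = σ_min ^ t` with `σ_min ∈ (0,1)` and `t ∈ (0,1)`,
`t / (t² + σ_t²) ≤ max (log σ_min⁻¹) e²`. -/
theorem quotient_le_max_log_exp
    (smin : ℝ) (hsmin : smin ∈ Set.Ioo (0:ℝ) 1)
    (t : ℝ) (ht : t ∈ Set.Ioo (0:ℝ) 1) :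
    t / (t ^ 2 + (smin ^ t) ^ 2) ≤ max (Real.log smin⁻¹) (Real.exp 2) := by
  obtain ⟨hs0, hs1⟩ := hsmin
  obtain ⟨ht0, ht1⟩ := ht
  set L := Real.log smin⁻¹ with hL
  have hLpos : 0 < L := Real.log_pos (by rw [lt_inv_comm₀] <;> simpa)
  have hσpos : 0 < smin ^ t := Real.rpow_pos_of_pos hs0 t
  have hden : 0 < t ^ 2 + (smin ^ t) ^ 2 := by positivity
  rcases le_or_gt (1 / L) t with h | h
  · -- 1/t ≤ L
    refine le_trans ?_ (le_max_left _ _)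
    rw [div_le_iff₀ hden]
    have h1t : 1 / t ≤ L := by
      rw [div_le_iff₀ ht0]
      calc (1:ℝ) = L * (1/L) := by field_simp
        _ ≤ L * t := by nlinarith
    have : 1 ≤ L * t := by
      rw [div_le_iff₀ ht0] at h1t; linarith
    nlinarith [sq_nonneg (smin ^ t), sq_nonneg t]
  · -- σ_t² ≥ e^{-2}
    refine le_trans ?_ (le_max_right _ _)
    have hlog : Real.log smin = -L := by
      rw [hL, Real.log_inv]; ring
    have hσ : smin ^ t = Real.exp (-(t * L)) := by
      rw [Real.rpow_def_of_pos hs0, hlog]; ring_nf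
    have htL : t * L ≤ 1 := by
      have := (lt_div_iff₀ hLpos).mp h
      nlinarith
    have hσge : Real.exp (-1) ≤ smin ^ t := by
      rw [hσ]; exact Real.exp_le_exp.mpr (by linarith)
    have hσ2 : Real.exp (-2) ≤ (smin ^ t) ^ 2 := by
      have := mul_le_mul hσge hσge (le_of_lt (Real.exp_pos _)) hσpos.le
      calc Real.exp (-2) = Real.exp (-1) * Real.exp (-1) := by
            rw [← Real.exp_add]; norm_num
        _ ≤ smin ^ t * smin ^ t := this
        _ = (smin ^ t) ^ 2 := (sq _).symm
    rw [div_le_iff₀ hden]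
    have he : Real.exp (-2) * Real.exp 2 = 1 := by
      rw [← Real.exp_add]; norm_num
    have hepos := Real.exp_pos (2:ℝ)
    nlinarith [sq_nonneg t, mul_le_mul_of_nonneg_right hσ2 hepos.le]
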